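/- Let Ω = {(x,y) ∈ ℝ² : x + y ≥ 1 and x² + xy + y² ≤ 1}. If y = (y₁,y₂,y₃) ∈ ℝ³ has y₃ > 0 and (y₁/y₃, y₂/y₃) ∈ Ω, then for each d ∈ {1,…,5}, the vector M_d y has positive third coordinate and its normalization represents a point in Ω. -/

import Mathlib

noncomputable def Mmat : Fin 5 → Matrix (Fin 3) (Fin 3) ℝ :=
  ![!![-3, 1, 4; -4, -1, 4; -6, 0, 7],
    !![4, 1, 4; 3, -1, 4; 6, 0, 7],
    !![4, 3, 4; 3, 4, 4; 6, 6, 7],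
    !![-1, 3, 4; 1, 4, 4; 0, 6, 7],
    !![-1, -4, 4; 1, -3, 4; 0, -6, 7]]

lemma omega_step (L0 L1 L2 : ℝ) (hz : 0 < L2) (h1 : L2 ≤ L0 + L1)
    (h2 : L0 ^ 2 + L0 * L1 + L1 ^ 2 ≤ L2 ^ 2) :
    1 ≤ L0 / L2 + L1 / L2 ∧
      (L0 / L2) ^ 2 + (L0 / L2) * (L1 / L2) + (L1 / L2) ^ 2 ≤ 1 := by
  refine ⟨?_, ?_⟩
  · rw [← add_div, le_div_iff₀ hz, one_mul]; exact h1
  · have hz2 : (0:ℝ) < L2 ^ 2 := by positivity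
    rw [show (L0 / L2) ^ 2 + (L0 / L2) * (L1 / L2) + (L1 / L2) ^ 2
        = (L0 ^ 2 + L0 * L1 + L1 ^ 2) / L2 ^ 2 by field_simp,
      div_le_one hz2]
    exact h2

set_option maxHeartbeats 2000000 in
theorem M_preserves_Omega (y : Fin 3 → ℝ) (hy : 0 < y 2)
    (hsum : 1 ≤ y 0 / y 2 + y 1 / y 2)
    (hquad : (y 0 / y 2) ^ 2 + (y 0 / y 2) * (y 1 / y 2) + (y 1 / y 2) ^ 2 ≤ 1)
    (d : Fin 5) :
    0 < (Mmat d).mulVec y 2 ∧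
      1 ≤ (Mmat d).mulVec y 0 / (Mmat d).mulVec y 2 +
          (Mmat d).mulVec y 1 / (Mmat d).mulVec y 2 ∧
      ((Mmat d).mulVec y 0 / (Mmat d).mulVec y 2) ^ 2 +
          ((Mmat d).mulVec y 0 / (Mmat d).mulVec y 2) *
            ((Mmat d).mulVec y 1 / (Mmat d).mulVec y 2) +
          ((Mmat d).mulVec y 1 / (Mmat d).mulVec y 2) ^ 2 ≤ 1 := by
  have hs' : y 2 ≤ y 0 + y 1 := by
    rw [← add_div, le_div_iff₀ hy, one_mul] at hsum
    exact hsum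
  have hq' : y 0 ^ 2 + y 0 * y 1 + y 1 ^ 2 ≤ y 2 ^ 2 := by
    have h := mul_le_mul_of_nonneg_right hquad (sq_nonneg (y 2))
    calc y 0 ^ 2 + y 0 * y 1 + y 1 ^ 2
        = ((y 0 / y 2) ^ 2 + (y 0 / y 2) * (y 1 / y 2) + (y 1 / y 2) ^ 2) * y 2 ^ 2 := by
          field_simp
      _ ≤ 1 * y 2 ^ 2 := h
      _ = y 2 ^ 2 := one_mul _
  have huw : y 0 ≤ y 2 := by
    nlinarith [mul_nonneg (sub_nonneg.2 hs') hy.le, sq_nonneg (y 0 + y 1 - y 2),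
      sq_nonneg (y 0 - y 2), sq_nonneg (y 1 - y 2), sq_nonneg (y 0 + y 1)]
  have hvw : y 1 ≤ y 2 := by
    nlinarith [mul_nonneg (sub_nonneg.2 hs') hy.le, sq_nonneg (y 0 + y 1 - y 2),
      sq_nonneg (y 0 - y 2), sq_nonneg (y 1 - y 2), sq_nonneg (y 0 + y 1)]
  have hu0 : 0 ≤ y 0 := by linarith
  have hv0 : 0 ≤ y 1 := by linarith
  fin_cases d <;>
    simp [Mmat, Matrix.mulVec, dotProduct, Fin.sum_univ_three] <;>
    (refine ⟨by nlinarith, ?_⟩; refine omega_step _ _ _ ?_ ?_ ?_) <;>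
    nlinarith [hq', hs', huw, hvw, hu0, hv0, hy]
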